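/- Let s ∈ ℝ^N have nonnegative entries, let ε > 0, fix a coordinate j, and let H : Ω → (Fin N → Fin w) be a random hash function on a probability space (Ω, P) such that P(H(j') = H(j)) ≤ 1/w for every j' ≠ j. Then the overcount of coordinate j in one Count-Min Sketch row satisfies E[Σ_{j' ≠ j, H(j') = H(j)} s_{j'}] ≤ |s|₁ / w, and consequently P(Σ_{j' ≠ j, H(j') = H(j)} s_{j'} > ε |s|₁) ≤ 1/(ε w). -/

import Mathlib

open MeasureTheory
open scoped ENNReal

/-- For one Count-Min Sketch row with a universal random hash (pairwise collision
probability at most `1/w`), the expected overcount of coordinate `j` is at most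
`|s|₁ / w`, and by Markov's inequality the overcount exceeds `ε |s|₁` with probability
at most `1/(ε w)`. -/
theorem count_min_row_overcount {Ω : Type*} [MeasurableSpace Ω]
    (P : Measure Ω) [IsProbabilityMeasure P]
    (N w : ℕ) (hw : 1 ≤ w)
    (s : Fin N → ℝ) (hs : ∀ j, 0 ≤ s j)
    (ε : ℝ) (hε : 0 < ε) (j : Fin N)
    (H : Ω → Fin N → Fin w)
    (hmeas : ∀ j', MeasurableSet {ω | H ω j' = H ω j})
    (hcol : ∀ j', j' ≠ j → P {ω | H ω j' = H ω j} ≤ ((w : ℝ≥0∞))⁻¹) :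
    (∫ ω, ∑ j' ∈ Finset.univ.filter (fun j' => j' ≠ j ∧ H ω j' = H ω j), s j' ∂P
        ≤ (∑ j', s j') / (w : ℝ)) ∧
    P {ω | ε * ∑ j', s j'
        < ∑ j' ∈ Finset.univ.filter (fun j' => j' ≠ j ∧ H ω j' = H ω j), s j'}
      ≤ ENNReal.ofReal (1 / (ε * (w : ℝ))) := by
  set L := ∑ j', s j' with hL
  have hwpos : (0:ℝ) < w := by exact_mod_cast hw
  -- rewrite the overcount as a sum of indicators
  have hX : ∀ ω, (∑ j' ∈ Finset.univ.filter (fun j' => j' ≠ j ∧ H ω j' = H ω j), s j')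
      = ∑ j' ∈ Finset.univ.filter (· ≠ j),
          ({ω | H ω j' = H ω j}).indicator (fun _ => s j') ω := by
    intro ω
    rw [Finset.sum_filter, Finset.sum_filter]
    refine Finset.sum_congr rfl fun j' _ => ?_
    by_cases h1 : j' ≠ j <;> by_cases h2 : H ω j' = H ω j <;>
      simp [h1, h2, Set.indicator]
  have hint : ∀ j' : Fin N,
      Integrable (({ω | H ω j' = H ω j}).indicator (fun _ => s j')) P :=
    fun j' => (integrable_const _).indicator (hmeas j')
  have hXint : Integrable (fun ω => ∑ j' ∈ Finset.univ.filter (fun j' => j' ≠ j ∧ H ω j' = H ω j), s j') P := by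
    have : Integrable (fun ω => ∑ j' ∈ Finset.univ.filter (· ≠ j),
        ({ω | H ω j' = H ω j}).indicator (fun _ => s j') ω) P :=
      integrable_finset_sum _ fun j' _ => hint j'
    exact this.congr (Filter.Eventually.of_forall fun ω => (hX ω).symm)
  have hXnonneg : ∀ ω, 0 ≤ ∑ j' ∈ Finset.univ.filter (fun j' => j' ≠ j ∧ H ω j' = H ω j), s j' :=
    fun ω => Finset.sum_nonneg fun j' _ => hs j'
  have hXle : ∀ ω, (∑ j' ∈ Finset.univ.filter (fun j' => j' ≠ j ∧ H ω j' = H ω j), s j') ≤ L := by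
    intro ω
    exact Finset.sum_le_sum_of_subset_of_nonneg (Finset.filter_subset _ _)
      (fun i _ _ => hs i)
  have hE : (∫ ω, ∑ j' ∈ Finset.univ.filter (fun j' => j' ≠ j ∧ H ω j' = H ω j), s j' ∂P)
      ≤ L / (w : ℝ) := by
    calc (∫ ω, ∑ j' ∈ Finset.univ.filter (fun j' => j' ≠ j ∧ H ω j' = H ω j), s j' ∂P)
        = ∑ j' ∈ Finset.univ.filter (· ≠ j),
            ∫ ω, ({ω | H ω j' = H ω j}).indicator (fun _ => s j') ω ∂P := by
          rw [integral_congr_ae (Filter.Eventually.of_forall hX)]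
          exact integral_finset_sum _ fun j' _ => hint j'
      _ = ∑ j' ∈ Finset.univ.filter (· ≠ j), (P {ω | H ω j' = H ω j}).toReal * s j' := by
          refine Finset.sum_congr rfl fun j' _ => ?_
          rw [integral_indicator_const _ (hmeas j')]; simp; exact Or.inl rfl
      _ ≤ ∑ j' ∈ Finset.univ.filter (· ≠ j), (w : ℝ)⁻¹ * s j' := by
          refine Finset.sum_le_sum fun j' hj' => ?_
          have hj'' : j' ≠ j := by simpa using hj'
          refine mul_le_mul_of_nonneg_right ?_ (hs j')
          have hwne : (w : ℝ≥0∞) ≠ 0 := Nat.cast_ne_zero.mpr (by omega)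
          have := ENNReal.toReal_mono (ENNReal.inv_ne_top.mpr hwne) (hcol j' hj'')
          rwa [ENNReal.toReal_inv, ENNReal.toReal_natCast] at this
      _ ≤ ∑ j', (w : ℝ)⁻¹ * s j' :=
          Finset.sum_le_sum_of_subset_of_nonneg (Finset.filter_subset _ _)
            (fun i _ _ => mul_nonneg (by positivity) (hs i))
      _ = L / (w : ℝ) := by rw [← Finset.mul_sum]; ring
  refine ⟨hE, ?_⟩
  by_cases hL0 : L = 0
  · have : {ω | ε * L < ∑ j' ∈ Finset.univ.filter (fun j' => j' ≠ j ∧ H ω j' = H ω j), s j'} = ∅ := by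
      ext ω
      simp only [Set.mem_setOf_eq, Set.mem_empty_iff_false, iff_false, not_lt, hL0, mul_zero]
      have h1 := hXle ω
      rw [hL0] at h1
      exact h1
    rw [this]
    simp
  · have hLpos : 0 < L := lt_of_le_of_ne (Finset.sum_nonneg fun i _ => hs i) (Ne.symm hL0)
    have hmark := mul_meas_ge_le_integral_of_nonneg
      (μ := P) (Filter.Eventually.of_forall hXnonneg) hXint (ε * L)
    have hsub : P {ω | ε * L < ∑ j' ∈ Finset.univ.filter (fun j' => j' ≠ j ∧ H ω j' = H ω j), s j'}
        ≤ P {ω | ε * L ≤ ∑ j' ∈ Finset.univ.filter (fun j' => j' ≠ j ∧ H ω j' = H ω j), s j'} :=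
      measure_mono (Set.setOf_subset_setOf.mpr fun ω h => h.le)
    have hfin : P {ω | ε * L ≤ ∑ j' ∈ Finset.univ.filter (fun j' => j' ≠ j ∧ H ω j' = H ω j), s j'} ≠ ⊤ :=
      measure_ne_top _ _
    have htoReal : (P {ω | ε * L ≤ ∑ j' ∈ Finset.univ.filter (fun j' => j' ≠ j ∧ H ω j' = H ω j), s j'}).toReal
        ≤ 1 / (ε * (w : ℝ)) := by
      have h1 := hmark.trans hE
      set x := (P {ω | ε * L ≤ ∑ j' ∈ Finset.univ.filter (fun j' => j' ≠ j ∧ H ω j' = H ω j), s j'}).toReal with hx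
      have h2 : ε * L * x * w ≤ L := by
        have := mul_le_mul_of_nonneg_right h1 hwpos.le
        rwa [div_mul_cancel₀ _ hwpos.ne'] at this
      rw [le_div_iff₀ (mul_pos hε hwpos), ← mul_le_mul_iff_of_pos_right hLpos]
      have hring : x * (ε * ↑w) * L = ε * L * x * ↑w := by ring
      linarith [h2]
    calc P {ω | ε * L < ∑ j' ∈ Finset.univ.filter (fun j' => j' ≠ j ∧ H ω j' = H ω j), s j'}
        ≤ P {ω | ε * L ≤ ∑ j' ∈ Finset.univ.filter (fun j' => j' ≠ j ∧ H ω j' = H ω j), s j'} := hsub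
      _ = ENNReal.ofReal ((P {ω | ε * L ≤ ∑ j' ∈ Finset.univ.filter (fun j' => j' ≠ j ∧ H ω j' = H ω j), s j'}).toReal) := (ENNReal.ofReal_toReal hfin).symm
      _ ≤ ENNReal.ofReal (1 / (ε * (w : ℝ))) := ENNReal.ofReal_le_ofReal htoReal
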